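/- Let X be a real Banach space, T : X ⇉ X* a maximal monotone operator, h ∈ H_a(T), and let h₀ be a minimal element of L(h) with respect to the pointwise order. Then J(J h₀) = h₀. -/

import Mathlib

/- Setting: `X` is a real Banach space, `StrongDual ℝ X` its topological dual.
A point-to-set operator `T : X ⇉ X*` is identified with its graph,
a subset of `X × StrongDual ℝ X`.  Extended-real-valued functions
(`ℝ ∪ {+∞}`) are modelled by `EReal`. -/

noncomputable section

variable {X : Type*} [NormedAddCommGroup X] [NormedSpace ℝ X]

/-- The duality pairing `⟨x, x*⟩ = x*(x)` of a pair `p = (x, x*)`. -/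
def pairingFn (p : X × StrongDual ℝ X) : ℝ := p.2 p.1

/-- Convexity for extended-real-valued functions. -/
def EConvexOn {E : Type*} [AddCommMonoid E] [Module ℝ E] (h : E → EReal) : Prop :=
  ∀ p q : E, ∀ a b : ℝ, 0 ≤ a → 0 ≤ b → a + b = 1 →
    h (a • p + b • q) ≤ (a : EReal) * h p + (b : EReal) * h q

/-- `T` is a monotone operator: `⟨x - y, x* - y*⟩ ≥ 0` on the graph. -/
def MonotoneOp (T : Set (X × StrongDual ℝ X)) : Prop :=
  ∀ p ∈ T, ∀ q ∈ T, 0 ≤ (p.2 - q.2) (p.1 - q.1)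

/-- `T` is maximal monotone. -/
def MaximalMonotoneOp (T : Set (X × StrongDual ℝ X)) : Prop :=
  MonotoneOp T ∧
    ∀ p : X × StrongDual ℝ X, (∀ q ∈ T, 0 ≤ (p.2 - q.2) (p.1 - q.1)) → p ∈ T

/-- The transform `J h (x, x*) = sup_{(y, y*)} ⟨x, y*⟩ + ⟨y, x*⟩ - h (y, y*)`,
i.e. `J h (x, x*) = h* (x*, x)` via the canonical injection `X ↪ X**`. -/
def JT (h : X × StrongDual ℝ X → EReal) : X × StrongDual ℝ X → EReal :=
  fun p => ⨆ q : X × StrongDual ℝ X, (((q.2 p.1 + p.2 q.1 : ℝ) : EReal) - h q)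

/-- The family `H(T)` of convex lower semicontinuous functions on `X × X*`
majorizing the duality product and coinciding with it on `T`. -/
def HT (T : Set (X × StrongDual ℝ X)) : Set (X × StrongDual ℝ X → EReal) :=
  { h | EConvexOn h ∧ LowerSemicontinuous h ∧
      (∀ p : X × StrongDual ℝ X, (pairingFn p : EReal) ≤ h p) ∧
      (∀ p ∈ T, h p = (pairingFn p : EReal)) }

/-- The subfamily `H_a(T) = { h ∈ H(T) | h ≥ J h }`. -/
def Ha (T : Set (X × StrongDual ℝ X)) : Set (X × StrongDual ℝ X → EReal) :=
  { h | h ∈ HT T ∧ JT h ≤ h }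

/-- For `h ∈ H(T)`, the family `L(h) = { g ∈ H(T) | h ≥ g ≥ J g }`. -/
def Lfam (T : Set (X × StrongDual ℝ X)) (h : X × StrongDual ℝ X → EReal) :
    Set (X × StrongDual ℝ X → EReal) :=
  { g | g ∈ HT T ∧ g ≤ h ∧ JT g ≤ g }

/-- The Fenchel–Legendre conjugate `f*(x*) = sup_x ⟨x, x*⟩ - f x`. -/
def fconj (f : X → EReal) : StrongDual ℝ X → EReal :=
  fun x' => ⨆ x : X, (((x' x : ℝ) : EReal) - f x)

/-- The `ε`-subdifferential:
`∂_ε f (x) = { x* | f y ≥ f x + ⟨y - x, x*⟩ - ε for all y }`. -/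
def epsSubdiff (f : X → EReal) (ε : ℝ) (x : X) : Set (StrongDual ℝ X) :=
  { x' | ∀ y : X, f x + ((x' (y - x) - ε : ℝ) : EReal) ≤ f y }

/-- The graph of the subdifferential `∂f = ∂_0 f`. -/
def subdiffGraph (f : X → EReal) : Set (X × StrongDual ℝ X) :=
  { p | p.2 ∈ epsSubdiff f 0 p.1 }

/-- The `ε`-enlargement `T^ε (x) = { x* | ⟨x - y, x* - y*⟩ ≥ -ε for all (y, y*) ∈ T }`. -/
def enl (T : Set (X × StrongDual ℝ X)) (ε : ℝ) (x : X) :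
    Set (StrongDual ℝ X) :=
  { x' | ∀ q ∈ T, -ε ≤ (x' - q.2) (x - q.1) }

/-- The Fitzpatrick function
`φ_T (x, x*) = sup_{(y, y*) ∈ T} ⟨x, y*⟩ + ⟨y, x*⟩ - ⟨y, y*⟩`. -/
def fitz (T : Set (X × StrongDual ℝ X)) : X × StrongDual ℝ X → EReal :=
  fun p => ⨆ q ∈ T, ((q.2 p.1 + p.2 q.1 - q.2 q.1 : ℝ) : EReal)

-- auxiliary lemmas

lemma JT_antitone {f g : X × StrongDual ℝ X → EReal} (h : f ≤ g) : JT g ≤ JT f := by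
  intro p
  exact iSup_mono fun q => EReal.sub_le_sub le_rfl (h q)

lemma ereal_sub_sub_le (a : ℝ) (b : EReal) : (a : EReal) - ((a : EReal) - b) ≤ b := by
  induction b using EReal.rec with
  | bot => simp
  | coe b => norm_cast; simp
  | top => simp

lemma JT_JT_le (f : X × StrongDual ℝ X → EReal) : JT (JT f) ≤ f := by
  intro p
  refine iSup_le fun q => ?_
  have h1 : ((q.2 p.1 + p.2 q.1 : ℝ) : EReal) - f p ≤ JT f q := by
    rw [JT]
    refine le_iSup_of_le p (le_of_eq ?_)
    rw [add_comm (q.2 p.1)]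
  calc ((q.2 p.1 + p.2 q.1 : ℝ) : EReal) - JT f q
      ≤ ((q.2 p.1 + p.2 q.1 : ℝ) : EReal) - (((q.2 p.1 + p.2 q.1 : ℝ) : EReal) - f p) :=
        EReal.sub_le_sub le_rfl h1
    _ ≤ f p := ereal_sub_sub_le _ _

lemma conv_aux (a b u v : ℝ) (ha : 0 ≤ a) (hb : 0 ≤ b) (hab : a + b = 1) (C : EReal) :
    ((a * u + b * v : ℝ) : EReal) - C ≤
      (a : EReal) * ((u : EReal) - C) + (b : EReal) * ((v : EReal) - C) := by
  induction C using EReal.rec with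
  | top => simp
  | coe C =>
    norm_cast
    have hC : a * C + b * C = C := by rw [← add_mul, hab, one_mul]
    have h1 := mul_sub a u C
    have h2 := mul_sub b v C
    linarith
  | bot =>
    have h1 : (u : EReal) - ⊥ = ⊤ := by simp
    have h2 : (v : EReal) - ⊥ = ⊤ := by simp
    rw [h1, h2]
    rcases eq_or_lt_of_le ha with ha0 | hapos
    · have hb1 : b = 1 := by linarith
      subst hb1
      rw [← ha0]
      simp
    · rw [EReal.coe_mul_top_of_pos hapos]
      have hbot : (b : EReal) * ⊤ ≠ ⊥ := by
        rcases eq_or_lt_of_le hb with hb0 | hbpos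
        · rw [← hb0]; simp
        · rw [EReal.coe_mul_top_of_pos hbpos]; simp
      rw [EReal.top_add_of_ne_bot hbot]
      exact le_top

lemma EConvexOn_JT (f : X × StrongDual ℝ X → EReal) : EConvexOn (JT f) := by
  intro p p' a b ha hb hab
  refine iSup_le fun q => ?_
  have e1 : (q.2 (a • p + b • p').1 + (a • p + b • p').2 q.1 : ℝ) =
      a * (q.2 p.1 + p.2 q.1) + b * (q.2 p'.1 + p'.2 q.1) := by
    simp [Prod.fst_add, Prod.snd_add, Prod.smul_fst, Prod.smul_snd, map_add, map_smul,
      smul_eq_mul, ContinuousLinearMap.add_apply, ContinuousLinearMap.smul_apply]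
    ring
  rw [e1]
  refine (conv_aux a b _ _ ha hb hab (f q)).trans ?_
  gcongr
  · exact le_iSup (fun r : X × StrongDual ℝ X => ((r.2 p.1 + p.2 r.1 : ℝ) : EReal) - f r) q
  · exact le_iSup (fun r : X × StrongDual ℝ X => ((r.2 p'.1 + p'.2 r.1 : ℝ) : EReal) - f r) q

lemma lsc_JT (f : X × StrongDual ℝ X → EReal) : LowerSemicontinuous (JT f) := by
  apply lowerSemicontinuous_iSup
  intro q
  have hc : Continuous fun p : X × StrongDual ℝ X => (q.2 p.1 + p.2 q.1 : ℝ) :=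
    (q.2.continuous.comp continuous_fst).add
      ((ContinuousLinearMap.apply ℝ ℝ q.1).continuous.comp continuous_snd)
  generalize f q = C
  induction C using EReal.rec with
  | top =>
    have : (fun p : X × StrongDual ℝ X => ((q.2 p.1 + p.2 q.1 : ℝ) : EReal) - ⊤) =
        fun _ => (⊥ : EReal) := by
      funext p; simp
    rw [this]; exact lowerSemicontinuous_const
  | bot =>
    have : (fun p : X × StrongDual ℝ X => ((q.2 p.1 + p.2 q.1 : ℝ) : EReal) - ⊥) =
        fun _ => (⊤ : EReal) := by
      funext p; rw [sub_eq_add_neg]; simp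
    rw [this]; exact lowerSemicontinuous_const
  | coe C =>
    have : (fun p : X × StrongDual ℝ X => ((q.2 p.1 + p.2 q.1 : ℝ) : EReal) - (C : EReal)) =
        fun p => ((q.2 p.1 + p.2 q.1 - C : ℝ) : EReal) := by
      funext p; rw [← EReal.coe_sub]
    rw [this]
    exact (continuous_coe_real_ereal.comp (hc.sub continuous_const)).lowerSemicontinuous

lemma JT_ge_pairing {T : Set (X × StrongDual ℝ X)} (hT : MaximalMonotoneOp T)
    {h₀ : X × StrongDual ℝ X → EReal} (hH : h₀ ∈ HT T) :
    ∀ p, (pairingFn p : EReal) ≤ JT h₀ p := by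
  intro p
  by_cases hp : p ∈ T
  · refine le_trans ?_ (le_iSup (fun r : X × StrongDual ℝ X =>
      ((r.2 p.1 + p.2 r.1 : ℝ) : EReal) - h₀ r) p)
    rw [hH.2.2.2 p hp, ← EReal.coe_sub]
    rw [EReal.coe_le_coe_iff]
    simp [pairingFn]
  · obtain ⟨q, hq, hlt⟩ : ∃ q ∈ T, (p.2 - q.2) (p.1 - q.1) < 0 := by
      by_contra hcon
      push_neg at hcon
      exact hp (hT.2 p fun q hq => hcon q hq)
    refine le_trans ?_ (le_iSup (fun r : X × StrongDual ℝ X =>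
      ((r.2 p.1 + p.2 r.1 : ℝ) : EReal) - h₀ r) q)
    rw [hH.2.2.2 q hq, ← EReal.coe_sub]
    rw [EReal.coe_le_coe_iff]
    have hexp : (p.2 - q.2) (p.1 - q.1) =
        p.2 p.1 - p.2 q.1 - q.2 p.1 + q.2 q.1 := by
      simp [map_sub]; ring
    rw [hexp] at hlt
    simp only [pairingFn]
    linarith


/-- for `h ∈ H_a(T)` and `h₀` a minimal element of `L(h)` (pointwise order),
`J (J h₀) = h₀`. -/
theorem minimal_is_fixed_point_of_J_squared [CompleteSpace X]
    (T : Set (X × StrongDual ℝ X)) (hT : MaximalMonotoneOp T)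
    (h : X × StrongDual ℝ X → EReal) (hh : h ∈ Ha T)
    (h₀ : X × StrongDual ℝ X → EReal) (hmin : Minimal (· ∈ Lfam T h) h₀) :
    JT (JT h₀) = h₀ := by
  obtain ⟨hH, hle, hJ⟩ := hmin.1
  set g₀ := JT (JT h₀) with hg₀
  have hg₀_le : g₀ ≤ h₀ := JT_JT_le h₀
  have hJh₀_le : JT h₀ ≤ g₀ := JT_antitone hJ
  have hpair : ∀ p, (pairingFn p : EReal) ≤ g₀ p :=
    fun p => (JT_ge_pairing hT hH p).trans (hJh₀_le p)
  have hTeq : ∀ p ∈ T, g₀ p = (pairingFn p : EReal) := by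
    intro p hp
    refine le_antisymm ?_ (hpair p)
    rw [← hH.2.2.2 p hp]
    exact hg₀_le p
  have hmem : g₀ ∈ Lfam T h :=
    ⟨⟨EConvexOn_JT _, lsc_JT _, hpair, hTeq⟩,
      fun p => (hg₀_le p).trans (hle p), JT_antitone hJh₀_le⟩
  exact le_antisymm hg₀_le (hmin.2 hmem hg₀_le)
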